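/- Let (p_k)_{k≥1} be a summable sequence of nonnegative real numbers such that the sequence k ↦ d_k·(Σ_{i≥k} p_i) is summable. Then the sequence k ↦ k·p_k is summable and Σ_{k≥1} d_k·(Σ_{i≥k} p_i) ≥ W*·Σ_{k≥1} k·p_k, where W* = inf_{k≥1} (d_1 + d_2 + ... + d_k)/k. -/
import Mathlib

/-- Let `(d_k)_{k≥1}` be a nondecreasing sequence of positive reals with
`d_1 = 1` (here `d k` stands for `d_{k+1}`).  Let `(p_k)_{k≥1}` be a summable sequence of
nonnegative reals (here `p k` stands for `p_{k+1}`) such that `k ↦ d_k·(Σ_{i≥k} p_i)` is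
summable.  Then `k ↦ k·p_k` is summable and
`Σ_{k≥1} d_k·(Σ_{i≥k} p_i) ≥ W*·Σ_{k≥1} k·p_k`, where
`W* = inf_{k≥1} (d_1 + ⋯ + d_k)/k`. -/
theorem norm1D_ge_Wstar_mul_mean
    (d : ℕ → ℝ) (hd1 : d 0 = 1) (hdpos : ∀ k, 0 < d k) (hdmono : Monotone d)
    (p : ℕ → ℝ) (hppos : ∀ k, 0 ≤ p k) (hp : Summable p)
    (hD : Summable (fun k : ℕ => d k * ∑' i : ℕ, p (k + i))) :
    Summable (fun k : ℕ => (k + 1 : ℝ) * p k) ∧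
      (∑' k : ℕ, d k * ∑' i : ℕ, p (k + i)) ≥
        (⨅ k : ℕ, (∑ j ∈ Finset.range (k + 1), d j) / (k + 1)) *
          ∑' k : ℕ, (k + 1 : ℝ) * p k := by
  set g : ℕ × ℕ → ℝ := fun q => if q.1 ≤ q.2 then d q.1 * p q.2 else 0 with hgdef
  have hgnn : ∀ q, 0 ≤ g q := by
    intro q; simp only [hgdef]; split
    · exact mul_nonneg (hdpos _).le (hppos _)
    · exact le_rfl
  have hrow : ∀ k : ℕ, Summable fun n => g (k, n) := by
    intro k
    rw [← summable_nat_add_iff k]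
    have h : (fun i => g (k, i + k)) = fun i => d k * p (i + k) := by
      funext i; simp [hgdef, Nat.le_add_left]
    rw [h]
    exact ((summable_nat_add_iff k).mpr hp).mul_left _
  have hrowsum : ∀ k : ℕ, (∑' n, g (k, n)) = d k * ∑' i, p (k + i) := by
    intro k
    rw [← Summable.sum_add_tsum_nat_add k (hrow k)]
    have h1 : (∑ i ∈ Finset.range k, g (k, i)) = 0 := by
      apply Finset.sum_eq_zero
      intro i hi
      simp only [Finset.mem_range] at hi
      simp only [hgdef]
      rw [if_neg (by omega)]
    have h2 : (fun i => g (k, i + k)) = fun i => d k * p (k + i) := by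
      funext i; simp [hgdef, Nat.le_add_left, Nat.add_comm]
    rw [h1, h2, zero_add, tsum_mul_left]
  have hg : Summable g := by
    rw [summable_prod_of_nonneg hgnn]
    refine ⟨hrow, ?_⟩
    have : (fun k => ∑' n, g (k, n)) = fun k => d k * ∑' i, p (k + i) := funext hrowsum
    rw [this]; exact hD
  have hcolsum : ∀ n : ℕ, (∑' k, g (k, n)) = (∑ j ∈ Finset.range (n + 1), d j) * p n := by
    intro n
    rw [tsum_eq_sum (s := Finset.range (n + 1)) (by
      intro k hk
      simp only [Finset.mem_range] at hk
      simp only [hgdef]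
      rw [if_neg (by omega)])]
    rw [Finset.sum_mul]
    apply Finset.sum_congr rfl
    intro j hj
    simp only [Finset.mem_range] at hj
    simp only [hgdef]
    rw [if_pos (by omega)]
  have hgs : Summable (fun q : ℕ × ℕ => g q.swap) := hg.prod_symm
  have hcol : Summable fun n => ∑' k, g (k, n) := by
    have := ((summable_prod_of_nonneg (f := fun q : ℕ × ℕ => g q.swap)
      (fun q => hgnn _)).mp hgs).2
    exact this
  have hcolsummable : Summable fun n => (∑ j ∈ Finset.range (n + 1), d j) * p n := by
    have : (fun n => ∑' k, g (k, n)) = fun n => (∑ j ∈ Finset.range (n + 1), d j) * p n :=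
      funext hcolsum
    rwa [this] at hcol
  -- key equality of the two iterated sums
  have hEq : (∑' k : ℕ, d k * ∑' i : ℕ, p (k + i))
      = ∑' n, (∑ j ∈ Finset.range (n + 1), d j) * p n := by
    calc (∑' k : ℕ, d k * ∑' i : ℕ, p (k + i))
        = ∑' k, ∑' n, g (k, n) := by
          apply tsum_congr; intro k; rw [hrowsum]
      _ = ∑' q : ℕ × ℕ, g q := (Summable.tsum_prod' hg hrow).symm
      _ = ∑' q : ℕ × ℕ, g q.swap := by
          rw [← (Equiv.prodComm ℕ ℕ).tsum_eq (fun q => g q.swap)]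
          apply tsum_congr; intro q; rfl
      _ = ∑' n, ∑' k, g (k, n) := Summable.tsum_prod' hgs
          (fun n => ((summable_prod_of_nonneg (fun q => hgnn q.swap)).mp hgs).1 n)
      _ = ∑' n, (∑ j ∈ Finset.range (n + 1), d j) * p n := tsum_congr hcolsum
  have hterm : ∀ k : ℕ, (k + 1 : ℝ) ≤ ∑ j ∈ Finset.range (k + 1), d j := by
    intro k
    calc (k + 1 : ℝ) = ∑ _j ∈ Finset.range (k + 1), (1 : ℝ) := by simp
      _ ≤ ∑ j ∈ Finset.range (k + 1), d j :=
        Finset.sum_le_sum (fun j _ => by rw [← hd1]; exact hdmono (Nat.zero_le j))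
  have hsum1 : Summable (fun k : ℕ => (k + 1 : ℝ) * p k) := by
    apply Summable.of_nonneg_of_le
      (fun k => mul_nonneg (by positivity) (hppos k))
      (fun k => mul_le_mul_of_nonneg_right (hterm k) (hppos k)) hcolsummable
  refine ⟨hsum1, ?_⟩
  set W : ℝ := ⨅ k : ℕ, (∑ j ∈ Finset.range (k + 1), d j) / (k + 1) with hWdef
  have hbdd : BddBelow (Set.range fun k : ℕ => (∑ j ∈ Finset.range (k + 1), d j) / (k + 1)) := by
    refine ⟨0, ?_⟩
    rintro x ⟨k, rfl⟩
    exact div_nonneg (Finset.sum_nonneg fun j _ => (hdpos j).le) (by positivity)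
  have hWle : ∀ k : ℕ, W * (k + 1 : ℝ) ≤ ∑ j ∈ Finset.range (k + 1), d j := by
    intro k
    have h := ciInf_le hbdd k
    rw [le_div_iff₀ (by positivity)] at h
    exact h
  rw [hEq, ← tsum_mul_left]
  apply Summable.tsum_le_tsum _ (hsum1.mul_left W) hcolsummable
  intro k
  rw [← mul_assoc]
  exact mul_le_mul_of_nonneg_right (hWle k) (hppos k)
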